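/- Let h0 > 0, h ≥ h0, and M ∈ ℝ with M ≥ 0. Then the function ū(x,t) := φ(x;h0) + (arctan h0)·t + h, where φ(x;h0) := -(1/arctan h0)·ln(cos((arctan h0)·x)), is a lower solution of problem (B) for t > 0: it satisfies the equation u_t = u_xx/(1+u_x^2) with equality, and ū_x(1,t) = h0 ≤ ū(1,t) and ū_x(-1,t) = -h0 ≥ -ū(-1,t). -/

import Mathlib

open Real

/-- Partial derivative in `x` of a function `u(x,t)`. -/
noncomputable def ux (u : ℝ → ℝ → ℝ) (x t : ℝ) : ℝ := deriv (fun y => u y t) x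

/-- Second partial derivative in `x` of a function `u(x,t)`. -/
noncomputable def uxx (u : ℝ → ℝ → ℝ) (x t : ℝ) : ℝ := deriv (fun y => ux u y t) x

/-- Partial derivative in `t` of a function `u(x,t)`. -/
noncomputable def ut (u : ℝ → ℝ → ℝ) (x t : ℝ) : ℝ := deriv (fun s => u x s) t

/-- for `h0 > 0`, `h ≥ h0`, `M ≥ 0`, the function
`ū(x,t) = φ(x;h0) + (arctan h0)t + h` with
`φ(x;h0) = -(1/arctan h0)·ln(cos((arctan h0)x))` is a lower solution of (B)
for `t > 0`: it satisfies the equation `u_t = u_xx/(1+u_x²)` with equality,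
`ū_x(1,t) = h0 ≤ ū(1,t)` and `ū_x(-1,t) = -h0 ≥ -ū(-1,t)`. -/
theorem stmt_9 (h0 h M : ℝ) (hh0 : 0 < h0) (hh : h0 ≤ h) (hM : 0 ≤ M)
    (φ : ℝ → ℝ)
    (hφ : ∀ x : ℝ, φ x = -(1 / Real.arctan h0) * Real.log (Real.cos (Real.arctan h0 * x)))
    (ubar : ℝ → ℝ → ℝ)
    (hubar : ∀ x t : ℝ, ubar x t = φ x + Real.arctan h0 * t + h) :
    (∀ t > (0 : ℝ), ∀ x ∈ Set.Icc (-1 : ℝ) 1,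
        DifferentiableAt ℝ (fun y => ubar y t) x ∧
        DifferentiableAt ℝ (fun y => ux ubar y t) x ∧
        DifferentiableAt ℝ (fun s => ubar x s) t ∧
        ut ubar x t = uxx ubar x t / (1 + ux ubar x t ^ 2)) ∧
    (∀ t > (0 : ℝ),
        ux ubar 1 t = h0 ∧ h0 ≤ ubar 1 t ∧
        ux ubar (-1) t = -h0 ∧ -h0 ≥ -(ubar (-1) t)) := by
  set a := Real.arctan h0 with ha_def
  have ha0 : 0 < a := by have := Real.arctan_strictMono hh0; rwa [Real.arctan_zero] at this
  have ha2 : a < π / 2 := Real.arctan_lt_pi_div_two h0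
  -- cos positivity on [-1,1] (and on an open set)
  have hmem : ∀ x : ℝ, |x| ≤ 1 → 0 < Real.cos (a * x) := by
    intro x hx
    apply Real.cos_pos_of_mem_Ioo
    have h1 : |a * x| ≤ a := by
      rw [abs_mul, abs_of_pos ha0]
      nlinarith [abs_nonneg x]
    have := abs_le.mp h1
    constructor <;> [linarith; linarith]
  have hU : IsOpen {y : ℝ | 0 < Real.cos (a * y)} :=
    isOpen_lt continuous_const (Real.continuous_cos.comp (continuous_const.mul continuous_id))
  -- derivative of x-slices of ubar
  have hDa : ∀ y : ℝ, HasDerivAt (fun z : ℝ => a * z) a y := by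
    intro y
    simpa using (hasDerivAt_id y).const_mul a
  have hubar_x : ∀ t : ℝ, ∀ y : ℝ, 0 < Real.cos (a * y) →
      HasDerivAt (fun z => ubar z t) (Real.tan (a * y)) y := by
    intro t y hy
    have h2 : HasDerivAt (fun z => Real.cos (a * z)) (-Real.sin (a * y) * a) y :=
      (Real.hasDerivAt_cos (a * y)).comp y (hDa y)
    have h3 : HasDerivAt (fun z => Real.log (Real.cos (a * z)))
        ((Real.cos (a * y))⁻¹ * (-Real.sin (a * y) * a)) y :=
      by have := (Real.hasDerivAt_log hy.ne').comp y h2; exact this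
    have h4 := (h3.const_mul (-(1 / a))).add_const (a * t + h)
    have heq : (fun z => -(1 / a) * Real.log (Real.cos (a * z)) + (a * t + h))
        = fun z => ubar z t := by
      funext z; rw [hubar, hφ]; ring
    rw [heq] at h4
    refine h4.congr_deriv ?_
    rw [Real.tan_eq_sin_div_cos]
    field_simp
  have hux : ∀ t : ℝ, ∀ y : ℝ, 0 < Real.cos (a * y) → ux ubar y t = Real.tan (a * y) := by
    intro t y hy
    exact (hubar_x t y hy).deriv
  -- derivative of tan (a x)
  have htand : ∀ y : ℝ, 0 < Real.cos (a * y) →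
      HasDerivAt (fun z => Real.tan (a * z)) (a * (1 + Real.tan (a * y) ^ 2)) y := by
    intro y hy
    have := (Real.hasDerivAt_tan hy.ne').comp y (hDa y)
    refine this.congr_deriv ?_
    rw [Real.tan_eq_sin_div_cos]
    have hs := Real.sin_sq_add_cos_sq (a * y)
    field_simp
    try nlinarith [hy]
  -- second derivative
  have huxx : ∀ t : ℝ, ∀ x : ℝ, 0 < Real.cos (a * x) →
      HasDerivAt (fun y => ux ubar y t) (a * (1 + Real.tan (a * x) ^ 2)) x := by
    intro t x hx
    have hEv : (fun y => Real.tan (a * y)) =ᶠ[nhds x] (fun y => ux ubar y t) :=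
      Filter.eventuallyEq_of_mem (hU.mem_nhds hx) (fun y hy => (hux t y hy).symm)
    exact (htand x hx).congr_of_eventuallyEq hEv.symm
  -- time derivative
  have hut : ∀ t x : ℝ, HasDerivAt (fun s => ubar x s) a t := by
    intro t x
    have h1 : HasDerivAt (fun s : ℝ => a * s + (φ x + h)) a t := by
      simpa using ((hasDerivAt_id t).const_mul a).add_const (φ x + h)
    have heq : (fun s : ℝ => a * s + (φ x + h)) = fun s => ubar x s := by
      funext s; rw [hubar]; ring
    rw [heq] at h1
    simpa using h1
  -- φ 1 and φ (-1) nonneg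
  have hlog : Real.log (Real.cos a) ≤ 0 :=
    Real.log_nonpos (le_of_lt (hmem 1 (by norm_num) |>.trans_le (by rw [mul_one]))) (by
      rw [← mul_one a] at *; exact Real.cos_le_one _)
  have hcos1 : 0 < Real.cos (a * 1) := hmem 1 (by norm_num)
  have hcosm1 : 0 < Real.cos (a * (-1)) := hmem (-1) (by norm_num)
  have hφ1 : 0 ≤ φ 1 := by
    rw [hφ, mul_one]
    have : 0 < 1 / a := by positivity
    nlinarith
  have hφm1 : 0 ≤ φ (-1) := by
    rw [hφ]
    have : Real.cos (a * (-1)) = Real.cos a := by rw [mul_neg_one, Real.cos_neg]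
    rw [this]
    have : 0 < 1 / a := by positivity
    nlinarith
  constructor
  · intro t ht x hx
    have hcx : 0 < Real.cos (a * x) := hmem x (abs_le.mpr ⟨hx.1, hx.2⟩)
    refine ⟨(hubar_x t x hcx).differentiableAt, (huxx t x hcx).differentiableAt,
      (hut t x).differentiableAt, ?_⟩
    have e1 : ut ubar x t = a := (hut t x).deriv
    have e2 : ux ubar x t = Real.tan (a * x) := hux t x hcx
    have e3 : uxx ubar x t = a * (1 + Real.tan (a * x) ^ 2) := (huxx t x hcx).deriv
    rw [e1, e2, e3]
    have hpos : 0 < 1 + Real.tan (a * x) ^ 2 := by positivity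
    field_simp
  · intro t ht
    have e1 : ux ubar 1 t = Real.tan (a * 1) := hux t 1 hcos1
    have e2 : ux ubar (-1) t = Real.tan (a * (-1)) := hux t (-1) hcosm1
    have hta : Real.tan a = h0 := Real.tan_arctan h0
    refine ⟨by rw [e1, mul_one, hta], ?_, by rw [e2, mul_neg_one, Real.tan_neg, hta], ?_⟩
    · rw [hubar]
      nlinarith
    · rw [hubar]
      nlinarith
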